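/- Let p be a prime and let f₁ : ℕ → ℂ be a sequence with f₁(0) = 1. Then the sequence a₁ : ℕ → ℂ given by a₁(n) = f₁(ν_p(n)) is multiplicative (i.e. a₁(mn) = a₁(m)·a₁(n) for all coprime m, n ≥ 1, and a₁(1) = 1). Moreover, if f₁ is eventually periodic, then a₁ is p-automatic. -/
import Mathlib


/-- A sequence `f : ℕ → ℂ` is `lam`-automatic if its `lam`-kernel is finite. -/
def IsAutomatic (lam : ℕ) (f : ℕ → ℂ) : Prop :=
  {g : ℕ → ℂ | ∃ k r : ℕ, r < lam ^ k ∧ g = fun n => f (lam ^ k * n + r)}.Finite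

/-- A sequence is multiplicative if `f 1 = 1` and `f (m*n) = f m * f n` for coprime `m n ≥ 1`. -/
def IsMultiplicativeSeq (f : ℕ → ℂ) : Prop :=
  f 1 = 1 ∧ ∀ m n : ℕ, 1 ≤ m → 1 ≤ n → Nat.Coprime m n → f (m * n) = f m * f n

/-- Eventually periodic sequence. -/
def EventuallyPeriodicSeq (f : ℕ → ℂ) : Prop :=
  ∃ d : ℕ, 1 ≤ d ∧ ∃ n₀ : ℕ, ∀ n ≥ n₀, f (n + d) = f n

/-- A Dirichlet character of modulus `k`: `k`-periodic, completely multiplicative,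
and vanishing exactly at arguments not coprime to `k`. -/
def IsDirichletCharacterSeq (k : ℕ) (χ : ℕ → ℂ) : Prop :=
  (∀ n : ℕ, χ (n + k) = χ n) ∧ (∀ m n : ℕ, χ (m * n) = χ m * χ n) ∧
    (∀ n : ℕ, χ n = 0 ↔ 1 < Nat.gcd n k)

private lemma per_shift (f : ℕ → ℂ) (d n₀ : ℕ) (hper : ∀ n ≥ n₀, f (n + d) = f n) :
    ∀ m n, n ≥ n₀ → f (n + m * d) = f n := by
  intro m
  induction m with
  | zero => simp
  | succ m ih =>
    intro n hn
    have h : n + (m + 1) * d = (n + m * d) + d := by ring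
    rw [h, hper _ (le_trans hn (Nat.le_add_right _ _)), ih n hn]

private lemma per_canon (f : ℕ → ℂ) (d n₀ : ℕ) (hper : ∀ n ≥ n₀, f (n + d) = f n)
    (j : ℕ) (hj : n₀ ≤ j) : f j = f (n₀ + (j - n₀) % d) := by
  have h0 := Nat.mod_add_div' (j - n₀) d
  have h1 : j = (n₀ + (j - n₀) % d) + ((j - n₀) / d) * d := by omega
  conv_lhs => rw [h1]
  rw [per_shift f d n₀ hper _ _ (Nat.le_add_right _ _)]

private lemma per_cong (f : ℕ → ℂ) (d n₀ : ℕ) (hper : ∀ n ≥ n₀, f (n + d) = f n)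
    (j j' : ℕ) (hj : n₀ ≤ j) (hj' : n₀ ≤ j') (h : j % d = j' % d) : f j = f j' := by
  rw [per_canon f d n₀ hper j hj, per_canon f d n₀ hper j' hj']
  have h1 : (n₀ + (j - n₀)) % d = (n₀ + (j' - n₀)) % d := by
    rwa [Nat.add_sub_cancel' hj, Nat.add_sub_cancel' hj']
  have h2 : (j - n₀) % d = (j' - n₀) % d := Nat.ModEq.add_left_cancel' n₀ h1
  rw [h2]

private lemma val_add (p : ℕ) (hp : p.Prime) (k r n : ℕ) (hr : 0 < r) (hrk : r < p ^ k) :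
    padicValNat p (p ^ k * n + r) = padicValNat p r := by
  haveI : Fact p.Prime := ⟨hp⟩
  set v := padicValNat p r with hv
  have hdvd : p ^ v ∣ r := pow_padicValNat_dvd
  have hvk : v < k := by
    have h1 : p ^ v ≤ r := Nat.le_of_dvd hr hdvd
    exact (Nat.pow_lt_pow_iff_right hp.one_lt).mp (lt_of_le_of_lt h1 hrk)
  have hsum : p ^ k * n + r ≠ 0 := by omega
  apply le_antisymm
  · by_contra hlt
    push_neg at hlt
    have h2 : p ^ (v + 1) ∣ p ^ k * n + r :=
      (padicValNat_dvd_iff_le hsum).mpr hlt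
    have h3 : p ^ (v + 1) ∣ p ^ k * n :=
      Dvd.dvd.mul_right (pow_dvd_pow p hvk) n
    have h4 : p ^ (v + 1) ∣ r := (Nat.dvd_add_right h3).mp h2
    have := (padicValNat_dvd_iff_le hr.ne').mp h4
    omega
  · refine (padicValNat_dvd_iff_le hsum).mp ?_
    exact dvd_add (Dvd.dvd.mul_right (pow_dvd_pow p hvk.le) n) hdvd

theorem stmt_3 (p : ℕ) (hp : p.Prime)
    (f₁ : ℕ → ℂ) (hf₁0 : f₁ 0 = 1)
    (a₁ : ℕ → ℂ) (hdef : ∀ n : ℕ, a₁ n = f₁ (padicValNat p n)) :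
    IsMultiplicativeSeq a₁ ∧
      (EventuallyPeriodicSeq f₁ → IsAutomatic p a₁) := by
  haveI : Fact p.Prime := ⟨hp⟩
  have hp2 := hp.two_le
  constructor
  · constructor
    · rw [hdef 1, padicValNat.one, hf₁0]
    · intro m n hm hn hco
      rw [hdef, hdef, hdef, padicValNat.mul (by omega) (by omega)]
      by_cases hpm : p ∣ m
      · have hpn : ¬ p ∣ n := by
          intro h
          have hg : p ∣ Nat.gcd m n := Nat.dvd_gcd hpm h
          rw [Nat.Coprime] at hco
          rw [hco] at hg
          exact absurd (Nat.le_of_dvd one_pos hg) (by omega)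
        rw [padicValNat.eq_zero_of_not_dvd hpn, add_zero, hf₁0, mul_one]
      · rw [padicValNat.eq_zero_of_not_dvd hpm, zero_add, hf₁0, one_mul]
  · rintro ⟨d, hd, n₀, hper⟩
    have hfin : ((fun k => fun n => a₁ (p ^ k * n)) '' Set.Iio (n₀ + d) ∪
        (fun c => (fun _ : ℕ => c)) '' (f₁ '' Set.Iio (n₀ + d))).Finite :=
      Set.Finite.union ((Set.finite_Iio _).image _) (((Set.finite_Iio _).image _).image _)
    refine Set.Finite.subset hfin ?_
    rintro g ⟨k, r, hrk, rfl⟩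
    rcases Nat.eq_zero_or_pos r with rfl | hr
    · left
      rcases lt_or_ge k (n₀ + d) with hk | hk
      · exact ⟨k, hk, by funext n; simp⟩
      · have hm := Nat.mod_lt (k - n₀) (show 0 < d by omega)
        refine ⟨n₀ + (k - n₀) % d, Set.mem_Iio.mpr (by omega), ?_⟩
        funext n
        simp only [add_zero]
        rcases Nat.eq_zero_or_pos n with rfl | hn
        · simp
        · have hpk : ∀ j : ℕ, (p : ℕ) ^ j ≠ 0 := fun j => pow_ne_zero j (by omega)
          rw [hdef, hdef, padicValNat.mul (hpk _) (by omega),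
            padicValNat.mul (hpk _) (by omega),
            padicValNat.prime_pow, padicValNat.prime_pow]
          refine per_cong f₁ d n₀ hper _ _ ?_ ?_ ?_
          · omega
          · omega
          have hco : (n₀ + (k - n₀) % d) ≡ k [MOD d] := by
            have h1 : (k - n₀) % d ≡ (k - n₀) [MOD d] := Nat.mod_modEq _ d
            have h2 := Nat.ModEq.add_left n₀ h1
            rwa [Nat.add_sub_cancel' (by omega : n₀ ≤ k)] at h2
          exact hco.add_right _
    · right
      refine ⟨f₁ (padicValNat p r), ?_, ?_⟩
      · rcases lt_or_ge (padicValNat p r) (n₀ + d) with h | h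
        · exact ⟨padicValNat p r, h, rfl⟩
        · have hm := Nat.mod_lt (padicValNat p r - n₀) (show 0 < d by omega)
          exact ⟨n₀ + (padicValNat p r - n₀) % d, Set.mem_Iio.mpr (by omega),
            (per_canon f₁ d n₀ hper _ (by omega)).symm⟩
      · funext n
        rw [hdef, val_add p hp k r n hr hrk]
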